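/- Let R be a commutative local ring with principal maximal ideal m = (p) ≠ 0 and m² = 0. If α : R^a → R^b is an R-linear map between finite free modules, then there exist R-linear isomorphisms φ₁, φ₂ and natural numbers u, v such that φ₂ ∘ α ∘ φ₁⁻¹ is given by a block diagonal matrix diag(p·I_u, I_v, 0). -/

import Mathlib

open Matrix

section SNF

variable {R : Type*} [CommRing R]

/-- Equivalence of matrices via multiplication by unit-determinant square matrices. -/
def MRel {m n : Type*} [Fintype m] [Fintype n] [DecidableEq m] [DecidableEq n]
    (A B : Matrix m n R) : Prop :=
  ∃ (P : Matrix m m R) (Q : Matrix n n R), IsUnit (Matrix.det P) ∧ IsUnit (Matrix.det Q) ∧ P * A * Q = B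

variable {m n x y : Type*} [Fintype m] [Fintype n] [DecidableEq m] [DecidableEq n]
  [Fintype x] [Fintype y] [DecidableEq x] [DecidableEq y]

theorem mrel_refl (A : Matrix m n R) : MRel A A :=
  ⟨1, 1, by simp, by simp, by simp⟩

theorem mrel_trans {A B C : Matrix m n R} (h1 : MRel A B) (h2 : MRel B C) : MRel A C := by
  obtain ⟨P1, Q1, hP1, hQ1, e1⟩ := h1
  obtain ⟨P2, Q2, hP2, hQ2, e2⟩ := h2
  refine ⟨P2 * P1, Q1 * Q2, by rw [Matrix.det_mul]; exact hP2.mul hP1,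
    by rw [Matrix.det_mul]; exact hQ1.mul hQ2, ?_⟩
  rw [← e2, ← e1]
  simp only [Matrix.mul_assoc]

theorem mrel_of_eq_mul {A B : Matrix m n R} {L : Matrix m m R} {U : Matrix n n R}
    (hL : IsUnit L.det) (hU : IsUnit U.det) (h : A = L * B * U) : MRel A B := by
  refine ⟨L⁻¹, U⁻¹, Matrix.isUnit_nonsing_inv_det _ hL, Matrix.isUnit_nonsing_inv_det _ hU, ?_⟩
  rw [h, ← Matrix.mul_assoc, Matrix.mul_nonsing_inv_cancel_right _ _ hU,
    Matrix.nonsing_inv_mul_cancel_left _ _ hL]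

theorem mrel_smul (r : R) {A B : Matrix m n R} (h : MRel A B) : MRel (r • A) (r • B) := by
  obtain ⟨P, Q, hP, hQ, e⟩ := h
  exact ⟨P, Q, hP, hQ, by rw [Matrix.mul_smul, Matrix.smul_mul, e]⟩

theorem mrel_congr (e : x ≃ m) (f : y ≃ n) {A B : Matrix m n R} (h : MRel A B) :
    MRel (A.submatrix e f) (B.submatrix e f) := by
  obtain ⟨P, Q, hP, hQ, hEq⟩ := h
  refine ⟨P.submatrix e e, Q.submatrix f f,
    by rwa [Matrix.det_submatrix_equiv_self], by rwa [Matrix.det_submatrix_equiv_self], ?_⟩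
  rw [Matrix.submatrix_mul_equiv P A _ _ _, Matrix.submatrix_mul_equiv _ Q _ f _, hEq]

theorem mrel_reindex (e : x ≃ m) (f : y ≃ n) {A : Matrix m n R} {B : Matrix x y R}
    (h : MRel (A.submatrix e f) B) : MRel A (B.submatrix e.symm f.symm) := by
  have := mrel_congr e.symm f.symm h
  simpa using this

theorem isUnit_det_perm (σ : Equiv.Perm m) : IsUnit ((σ.toPEquiv.toMatrix : Matrix m m R).det) := by
  have h : (σ.toPEquiv.toMatrix : Matrix m m R) = σ.permMatrix R := rfl
  rw [h, Matrix.det_permutation]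
  exact ((Equiv.Perm.sign σ).isUnit.map (Int.castRingHom R))

theorem mrel_submatrix_perm (σ : Equiv.Perm m) (τ : Equiv.Perm n) (A : Matrix m n R) :
    MRel A (A.submatrix σ τ) := by
  refine ⟨σ.toPEquiv.toMatrix, τ.symm.toPEquiv.toMatrix, isUnit_det_perm σ,
    isUnit_det_perm τ.symm, ?_⟩
  rw [PEquiv.toMatrix_toPEquiv_mul, PEquiv.mul_toMatrix_toPEquiv]
  simp

theorem mrel_fromBlocks {b' a' : ℕ} (B : Matrix (Fin 1) (Fin 1) R)
    {S T : Matrix (Fin b') (Fin a') R} (h : MRel S T) :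
    MRel (Matrix.fromBlocks B 0 0 S) (Matrix.fromBlocks B 0 0 T) := by
  obtain ⟨P, Q, hP, hQ, e⟩ := h
  refine ⟨Matrix.fromBlocks 1 0 0 P, Matrix.fromBlocks 1 0 0 Q, ?_, ?_, ?_⟩
  · rw [Matrix.det_fromBlocks_zero₂₁]; simpa using hP
  · rw [Matrix.det_fromBlocks_zero₂₁]; simpa using hQ
  · simp [Matrix.fromBlocks_multiply, e]

/-- The index equivalence splitting off the first coordinate. -/
def eqv (n : ℕ) : Fin 1 ⊕ Fin n ≃ Fin (n + 1) :=
  finSumFinEquiv.trans (finCongr (Nat.add_comm 1 n))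

theorem eqv_inl (n : ℕ) (z : Fin 1) : ((eqv n (Sum.inl z) : Fin (n+1)) : ℕ) = 0 := by
  simp [eqv, finSumFinEquiv]

theorem eqv_inr (n : ℕ) (k : Fin n) : ((eqv n (Sum.inr k) : Fin (n+1)) : ℕ) = (k : ℕ) + 1 := by
  simp [eqv, finSumFinEquiv]

/-- Corner reduction: a matrix with a unit entry is equivalent to a block matrix
`fromBlocks 1 0 0 S`. -/
theorem corner_reduction {b' a' : ℕ} (C : Matrix (Fin (b'+1)) (Fin (a'+1)) R)
    (h : ∃ i j, IsUnit (C i j)) :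
    ∃ S : Matrix (Fin b') (Fin a') R,
      MRel C ((Matrix.fromBlocks 1 0 0 S).submatrix (eqv b').symm (eqv a').symm) := by
  obtain ⟨i₀, j₀, hu⟩ := h
  set C₁ : Matrix (Fin (b'+1)) (Fin (a'+1)) R :=
    C.submatrix (Equiv.swap 0 i₀) (Equiv.swap 0 j₀) with hC₁
  have h1 : MRel C C₁ := mrel_submatrix_perm _ _ _
  set B : Matrix (Fin 1 ⊕ Fin b') (Fin 1 ⊕ Fin a') R := C₁.submatrix (eqv b') (eqv a') with hB
  have hz : eqv b' (Sum.inl 0) = (0 : Fin (b'+1)) := Fin.ext (by rw [eqv_inl]; rfl)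
  have hz' : eqv a' (Sum.inl 0) = (0 : Fin (a'+1)) := Fin.ext (by rw [eqv_inl]; rfl)
  have hB00 : B.toBlocks₁₁ 0 0 = C i₀ j₀ := by
    simp only [Matrix.toBlocks₁₁, Matrix.of_apply, hB, Matrix.submatrix_apply, hz, hz', hC₁]
    rw [Equiv.swap_apply_left, Equiv.swap_apply_left]
  have hdet : IsUnit B.toBlocks₁₁.det := by
    rw [Matrix.det_fin_one, hB00]; exact hu
  have : Invertible B.toBlocks₁₁ := B.toBlocks₁₁.invertibleOfIsUnitDet hdet
  set S : Matrix (Fin b') (Fin a') R :=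
    B.toBlocks₂₂ - B.toBlocks₂₁ * ⅟B.toBlocks₁₁ * B.toBlocks₁₂ with hS
  have key : B = (Matrix.fromBlocks 1 0 (B.toBlocks₂₁ * ⅟B.toBlocks₁₁) 1 : Matrix (Fin 1 ⊕ Fin b') (Fin 1 ⊕ Fin b') R) *
      (Matrix.fromBlocks B.toBlocks₁₁ 0 0 S : Matrix (Fin 1 ⊕ Fin b') (Fin 1 ⊕ Fin a') R) *
      (Matrix.fromBlocks 1 (⅟B.toBlocks₁₁ * B.toBlocks₁₂) 0 1 : Matrix (Fin 1 ⊕ Fin a') (Fin 1 ⊕ Fin a') R) := by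
    conv_lhs => rw [← Matrix.fromBlocks_toBlocks B]
    exact Matrix.fromBlocks_eq_of_invertible₁₁ _ _ _ _
  have h2 : MRel B (Matrix.fromBlocks B.toBlocks₁₁ 0 0 S) := by
    refine mrel_of_eq_mul ?_ ?_ key
    · rw [Matrix.det_fromBlocks_zero₁₂]; simp
    · rw [Matrix.det_fromBlocks_zero₂₁]; simp
  have h3 : MRel (Matrix.fromBlocks B.toBlocks₁₁ 0 0 S) (Matrix.fromBlocks 1 0 0 S) := by
    refine ⟨Matrix.fromBlocks (⅟B.toBlocks₁₁) 0 0 1, 1, ?_, by simp, ?_⟩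
    · rw [Matrix.det_fromBlocks_zero₂₁]
      simpa using Matrix.isUnit_det_of_invertible (⅟B.toBlocks₁₁)
    · simp only [Matrix.fromBlocks_multiply, Matrix.mul_one, Matrix.mul_zero, Matrix.zero_mul,
        Matrix.one_mul, add_zero, zero_add, invOf_mul_self]
  have h4 : MRel C₁ ((Matrix.fromBlocks 1 0 0 S).submatrix (eqv b').symm (eqv a').symm) :=
    mrel_reindex _ _ (mrel_trans h2 h3)
  exact ⟨S, mrel_trans h1 h4⟩

/-- The normal form with `v` ones followed by `u` copies of `p` on the diagonal. -/
def Tm (p : R) (b a v u : ℕ) : Matrix (Fin b) (Fin a) R :=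
  Matrix.of fun i j =>
    if (i : ℕ) = (j : ℕ) ∧ (i : ℕ) < v then 1
    else if (i : ℕ) = (j : ℕ) ∧ (i : ℕ) < v + u then p else 0

theorem subm_one (p : R) (b' a' v u : ℕ) :
    (Matrix.fromBlocks 1 0 0 (Tm p b' a' v u)).submatrix (eqv b').symm (eqv a').symm
      = Tm p (b'+1) (a'+1) (v+1) u := by
  ext i j
  simp only [Matrix.submatrix_apply]
  cases hx : (eqv b').symm i with
  | inl z =>
    have hxi : i = eqv b' (Sum.inl z) := by
      have := congrArg (eqv b') hx; rwa [Equiv.apply_symm_apply] at this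
    have hi : (i : ℕ) = 0 := by rw [hxi, eqv_inl]
    cases hy : (eqv a').symm j with
    | inl w =>
      have hyj : j = eqv a' (Sum.inl w) := by
        have := congrArg (eqv a') hy; rwa [Equiv.apply_symm_apply] at this
      have hj : (j : ℕ) = 0 := by rw [hyj, eqv_inl]
      have hzw : z = w := Subsingleton.elim _ _
      simp only [Matrix.fromBlocks_apply₁₁, Tm, Matrix.of_apply, hi, hj, hzw,
        Matrix.one_apply_eq]
      rw [if_pos ⟨by trivial, by omega⟩]
    | inr l =>
      have hyj : j = eqv a' (Sum.inr l) := by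
        have := congrArg (eqv a') hy; rwa [Equiv.apply_symm_apply] at this
      have hj : (j : ℕ) = (l : ℕ) + 1 := by rw [hyj, eqv_inr]
      simp only [Matrix.fromBlocks_apply₁₂, Tm, Matrix.of_apply, hi, hj, Matrix.zero_apply]
      rw [if_neg (by omega), if_neg (by omega)]
  | inr k =>
    have hxi : i = eqv b' (Sum.inr k) := by
      have := congrArg (eqv b') hx; rwa [Equiv.apply_symm_apply] at this
    have hi : (i : ℕ) = (k : ℕ) + 1 := by rw [hxi, eqv_inr]
    cases hy : (eqv a').symm j with
    | inl w =>
      have hyj : j = eqv a' (Sum.inl w) := by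
        have := congrArg (eqv a') hy; rwa [Equiv.apply_symm_apply] at this
      have hj : (j : ℕ) = 0 := by rw [hyj, eqv_inl]
      simp only [Matrix.fromBlocks_apply₂₁, Tm, Matrix.of_apply, hi, hj, Matrix.zero_apply]
      rw [if_neg (by omega), if_neg (by omega)]
    | inr l =>
      have hyj : j = eqv a' (Sum.inr l) := by
        have := congrArg (eqv a') hy; rwa [Equiv.apply_symm_apply] at this
      have hj : (j : ℕ) = (l : ℕ) + 1 := by rw [hyj, eqv_inr]
      simp only [Matrix.fromBlocks_apply₂₂, Tm, Matrix.of_apply, hi, hj]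
      split_ifs <;> first | rfl | omega

theorem subm_p (p : R) (b' a' u : ℕ) :
    (Matrix.fromBlocks (p • (1 : Matrix (Fin 1) (Fin 1) R)) 0 0 (Tm p b' a' 0 u)).submatrix
        (eqv b').symm (eqv a').symm
      = Tm p (b'+1) (a'+1) 0 (u+1) := by
  ext i j
  simp only [Matrix.submatrix_apply]
  cases hx : (eqv b').symm i with
  | inl z =>
    have hxi : i = eqv b' (Sum.inl z) := by
      have := congrArg (eqv b') hx; rwa [Equiv.apply_symm_apply] at this
    have hi : (i : ℕ) = 0 := by rw [hxi, eqv_inl]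
    cases hy : (eqv a').symm j with
    | inl w =>
      have hyj : j = eqv a' (Sum.inl w) := by
        have := congrArg (eqv a') hy; rwa [Equiv.apply_symm_apply] at this
      have hj : (j : ℕ) = 0 := by rw [hyj, eqv_inl]
      have hzw : z = w := Subsingleton.elim _ _
      simp only [Matrix.fromBlocks_apply₁₁, Tm, Matrix.of_apply, hi, hj, hzw,
        Matrix.smul_apply, Matrix.one_apply_eq, smul_eq_mul, mul_one]
      rw [if_neg (by omega), if_pos ⟨by trivial, by omega⟩]
    | inr l =>
      have hyj : j = eqv a' (Sum.inr l) := by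
        have := congrArg (eqv a') hy; rwa [Equiv.apply_symm_apply] at this
      have hj : (j : ℕ) = (l : ℕ) + 1 := by rw [hyj, eqv_inr]
      simp only [Matrix.fromBlocks_apply₁₂, Tm, Matrix.of_apply, hi, hj, Matrix.zero_apply]
      rw [if_neg (by omega), if_neg (by omega)]
  | inr k =>
    have hxi : i = eqv b' (Sum.inr k) := by
      have := congrArg (eqv b') hx; rwa [Equiv.apply_symm_apply] at this
    have hi : (i : ℕ) = (k : ℕ) + 1 := by rw [hxi, eqv_inr]
    cases hy : (eqv a').symm j with
    | inl w =>
      have hyj : j = eqv a' (Sum.inl w) := by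
        have := congrArg (eqv a') hy; rwa [Equiv.apply_symm_apply] at this
      have hj : (j : ℕ) = 0 := by rw [hyj, eqv_inl]
      simp only [Matrix.fromBlocks_apply₂₁, Tm, Matrix.of_apply, hi, hj, Matrix.zero_apply]
      rw [if_neg (by omega), if_neg (by omega)]
    | inr l =>
      have hyj : j = eqv a' (Sum.inr l) := by
        have := congrArg (eqv a') hy; rwa [Equiv.apply_symm_apply] at this
      have hj : (j : ℕ) = (l : ℕ) + 1 := by rw [hyj, eqv_inr]
      simp only [Matrix.fromBlocks_apply₂₂, Tm, Matrix.of_apply, hi, hj]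
      split_ifs <;> first | rfl | omega

theorem snf_aux [IsLocalRing R] (p : R)
    (hm : IsLocalRing.maximalIdeal R = Ideal.span {p})
    (hne : IsLocalRing.maximalIdeal R ≠ ⊥)
    (hsq : (IsLocalRing.maximalIdeal R) ^ 2 = ⊥) :
    ∀ a b (A : Matrix (Fin b) (Fin a) R),
      ∃ v u, v + u ≤ a ∧ v + u ≤ b ∧ MRel A (Tm p b a v u) := by
  have hpmem : p ∈ IsLocalRing.maximalIdeal R := by
    rw [hm]; exact Ideal.mem_span_singleton_self p
  have hpp : p * p = 0 := by
    have h2 : p * p ∈ (IsLocalRing.maximalIdeal R) ^ 2 := by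
      rw [pow_two]; exact Ideal.mul_mem_mul hpmem hpmem
    rw [hsq] at h2; exact Ideal.mem_bot.mp h2
  have hdvd : ∀ x : R, ¬ IsUnit x → ∃ c, x = p * c := by
    intro x hx
    have hx' : x ∈ IsLocalRing.maximalIdeal R :=
      (IsLocalRing.mem_maximalIdeal x).mpr (mem_nonunits_iff.mpr hx)
    rw [hm, Ideal.mem_span_singleton] at hx'
    obtain ⟨c, hc⟩ := hx'; exact ⟨c, hc⟩
  have hpz : p ≠ 0 := by
    intro h; exact hne (by rw [hm, h, Ideal.span_singleton_eq_bot])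
  intro a
  induction a with
  | zero =>
    intro b A
    refine ⟨0, 0, le_refl _, Nat.zero_le _, ?_⟩
    have hA : A = Tm p b 0 0 0 := by ext i j; exact j.elim0
    rw [hA]; exact mrel_refl _
  | succ a' ih =>
    intro b A
    by_cases hA0 : A = 0
    · subst hA0
      refine ⟨0, 0, by omega, by omega, ?_⟩
      have hT : Tm p b (a'+1) 0 0 = 0 := by ext i j; simp [Tm]
      rw [hT]; exact mrel_refl _
    · have hex : ∃ i j, A i j ≠ 0 := by
        by_contra h; push_neg at h; exact hA0 (by ext i j; exact h i j)
      obtain ⟨i₀, j₀, h0⟩ := hex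
      rcases b with _ | b'
      · exact i₀.elim0
      by_cases hunit : ∃ i j, IsUnit (A i j)
      · obtain ⟨S, hS⟩ := corner_reduction A hunit
        obtain ⟨v', u', hva, hvb, hrel⟩ := ih b' S
        have h2 : MRel A ((Matrix.fromBlocks 1 0 0 (Tm p b' a' v' u')).submatrix
            (eqv b').symm (eqv a').symm) :=
          mrel_trans hS (mrel_congr _ _ (mrel_fromBlocks 1 hrel))
        rw [subm_one] at h2
        exact ⟨v' + 1, u', by omega, by omega, h2⟩
      · push_neg at hunit
        choose Cf hCf using fun i j => hdvd _ (hunit i j)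
        have hApC : A = p • Matrix.of Cf := by
          ext i j; simp [hCf i j]
        have hCu : IsUnit (Cf i₀ j₀) := by
          by_contra hnc
          obtain ⟨d, hd⟩ := hdvd _ hnc
          exact h0 (by rw [hCf i₀ j₀, hd, ← mul_assoc, hpp, zero_mul])
        obtain ⟨S, hS⟩ := corner_reduction (Matrix.of Cf) ⟨i₀, j₀, hCu⟩
        have hsm : p • ((Matrix.fromBlocks 1 0 0 S).submatrix (eqv b').symm (eqv a').symm)
            = (Matrix.fromBlocks (p • (1 : Matrix (Fin 1) (Fin 1) R)) 0 0 (p • S)).submatrix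
              (eqv b').symm (eqv a').symm := by
          have h := Matrix.fromBlocks_smul p (1 : Matrix (Fin 1) (Fin 1) R) 0 0 S
          rw [smul_zero, smul_zero] at h
          rw [← h]
          ext i j
          simp [Matrix.submatrix_apply, Matrix.smul_apply]
        have hS2 : MRel A ((Matrix.fromBlocks (p • (1 : Matrix (Fin 1) (Fin 1) R)) 0 0
            (p • S)).submatrix (eqv b').symm (eqv a').symm) := by
          rw [hApC, ← hsm]
          exact mrel_smul p hS
        obtain ⟨v', u', hva, hvb, hrel⟩ := ih b' (p • S)
        have hv0 : v' = 0 := by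
          by_contra hv
          have hv1 : 1 ≤ v' := by omega
          have hb0 : 0 < b' := by omega
          have ha0 : 0 < a' := by omega
          obtain ⟨P', Q', hP', hQ', hPQ⟩ := hrel
          rw [Matrix.mul_smul, Matrix.smul_mul] at hPQ
          have h1 : Tm p b' a' v' u' ⟨0, hb0⟩ ⟨0, ha0⟩ = 1 := by
            simp only [Tm, Matrix.of_apply]
            rw [if_pos ⟨by trivial, by omega⟩]
          have h3 : p * ((P' * S * Q') ⟨0, hb0⟩ ⟨0, ha0⟩) = 1 := by
            have hc := congrFun (congrFun hPQ ⟨0, hb0⟩) ⟨0, ha0⟩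
            rw [h1] at hc
            simpa [Matrix.smul_apply] using hc
          apply hpz
          calc p = p * (p * ((P' * S * Q') ⟨0, hb0⟩ ⟨0, ha0⟩)) := by rw [h3, mul_one]
            _ = (p * p) * ((P' * S * Q') ⟨0, hb0⟩ ⟨0, ha0⟩) := by ring
            _ = 0 := by rw [hpp, zero_mul]
        subst hv0
        have h2 : MRel A ((Matrix.fromBlocks (p • (1 : Matrix (Fin 1) (Fin 1) R)) 0 0
            (Tm p b' a' 0 u')).submatrix (eqv b').symm (eqv a').symm) :=
          mrel_trans hS2 (mrel_congr _ _ (mrel_fromBlocks _ hrel))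
        rw [subm_p] at h2
        exact ⟨0, u' + 1, by omega, by omega, h2⟩

/-- The rotation on indices moving the block of `u` `p`'s in front. -/
def pf (u v m : ℕ) : ℕ := if m < u then m + v else if m < u + v then m - u else m

theorem pf_lt {n u v : ℕ} (h : u + v ≤ n) {m : ℕ} (hm : m < n) : pf u v m < n := by
  unfold pf; split_ifs <;> omega

noncomputable def permE (n u v : ℕ) (h : u + v ≤ n) : Equiv.Perm (Fin n) :=
  Equiv.ofBijective (fun i => ⟨pf u v i, pf_lt h i.isLt⟩)
    (Finite.injective_iff_bijective.mp (by
      intro i j hij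
      have hv := congrArg Fin.val hij
      simp only [pf] at hv
      apply Fin.ext
      split_ifs at hv <;> omega))

theorem permE_coe (n u v : ℕ) (h : u + v ≤ n) (i : Fin n) :
    ((permE n u v h i : Fin n) : ℕ) = pf u v (i : ℕ) := rfl

theorem Tm_perm (p : R) (a b u v : ℕ) (ha : u + v ≤ a) (hb : u + v ≤ b) :
    (Tm p b a v u).submatrix (permE b u v hb) (permE a u v ha)
      = Matrix.of (fun (i : Fin b) (j : Fin a) =>
          if (i : ℕ) = (j : ℕ) ∧ (i : ℕ) < u then p
          else if (i : ℕ) = (j : ℕ) ∧ (i : ℕ) < u + v then 1 else 0) := by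
  ext i j
  simp only [Matrix.submatrix_apply, Tm, Matrix.of_apply, permE_coe, pf]
  split_ifs <;> first | rfl | omega

end SNF

theorem stmt_12 (R : Type*) [CommRing R] [IsLocalRing R] (p : R)
    (hm : IsLocalRing.maximalIdeal R = Ideal.span {p})
    (hne : IsLocalRing.maximalIdeal R ≠ ⊥)
    (hsq : (IsLocalRing.maximalIdeal R) ^ 2 = ⊥)
    (a b : ℕ) (A : Matrix (Fin b) (Fin a) R) :
    ∃ (P : Matrix (Fin b) (Fin b) R) (Q : Matrix (Fin a) (Fin a) R) (u v : ℕ),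
      IsUnit P.det ∧ IsUnit Q.det ∧ u + v ≤ a ∧ u + v ≤ b ∧
      P * A * Q = Matrix.of (fun (i : Fin b) (j : Fin a) =>
        if (i : ℕ) = (j : ℕ) ∧ (i : ℕ) < u then p
        else if (i : ℕ) = (j : ℕ) ∧ (i : ℕ) < u + v then 1 else 0) := by
  obtain ⟨v, u, hva, hvb, P0, Q0, hP0, hQ0, hPQ⟩ := snf_aux p hm hne hsq a b A
  have ha : u + v ≤ a := by omega
  have hb : u + v ≤ b := by omega
  obtain ⟨P1, Q1, hP1, hQ1, h1⟩ :=
    mrel_submatrix_perm (permE b u v hb) (permE a u v ha) (Tm p b a v u)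
  refine ⟨P1 * P0, Q0 * Q1, u, v, ?_, ?_, ha, hb, ?_⟩
  · rw [Matrix.det_mul]; exact hP1.mul hP0
  · rw [Matrix.det_mul]; exact hQ0.mul hQ1
  · calc P1 * P0 * A * (Q0 * Q1) = P1 * (P0 * A * Q0) * Q1 := by
          simp only [Matrix.mul_assoc]
    _ = P1 * Tm p b a v u * Q1 := by rw [hPQ]
    _ = (Tm p b a v u).submatrix (permE b u v hb) (permE a u v ha) := h1
    _ = _ := Tm_perm p a b u v ha hb
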